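/- In the setup of the chordless case, the corners of each non-edge block are pairwise distinct: if the i-th block G_i is not a single edge, then t_i, t_{i+1}, and the successor C' of t_i on P_{t_i t_{i+1}} are three distinct vertices; in particular, (t_i, t_{i+1}) is not an edge of G (otherwise {u_j, t_i, t_{i+1}} would be a separating triangle of G). -/

import Mathlib

open Set

namespace CZPaper

/-- A point in the plane. -/
abbrev Pt : Type := ℝ × ℝ

/-- A simple arc in the plane: a continuous injective curve `[0,1] → ℝ²`. -/
structure Arc where
  f : ℝ → Pt
  cont : ContinuousOn f (Set.Icc 0 1)
  inj : Set.InjOn f (Set.Icc 0 1)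

/-- The image (trace) of an arc. -/
def Arc.img (a : Arc) : Set Pt := a.f '' Set.Icc 0 1

/-- The two endpoints of an arc. -/
def Arc.ends (a : Arc) : Set Pt := {a.f 0, a.f 1}

/-- A plane drawing of a simple graph: vertices map injectively to points, each edge
to a simple arc joining the points of its endpoints, and arcs meet other arcs or
vertex points only at shared endpoints. -/
structure PlaneDrawing {V : Type*} (G : SimpleGraph V) where
  vpos : V → Pt
  vpos_inj : Function.Injective vpos
  arc : G.edgeSet → Arc
  arc_ends : ∀ e : G.edgeSet, ∃ u v : V, (e : Sym2 V) = s(u, v) ∧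
    (arc e).f 0 = vpos u ∧ (arc e).f 1 = vpos v
  vertex_arc : ∀ (e : G.edgeSet) (w : V), vpos w ∈ (arc e).img → vpos w ∈ (arc e).ends
  arc_arc : ∀ e e' : G.edgeSet, e ≠ e' →
    (arc e).img ∩ (arc e').img ⊆ (arc e).ends ∩ (arc e').ends

/-- A graph is planar if it admits a plane drawing. -/
def IsPlanar {V : Type*} (G : SimpleGraph V) : Prop := Nonempty (PlaneDrawing G)

/-- A graph is 4-connected if it has at least 5 vertices and deleting any set of at
most 3 vertices leaves it connected. -/
def FourConnected {V : Type*} (G : SimpleGraph V) : Prop :=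
  5 ≤ Nat.card V ∧
  ∀ S : Set V, S.ncard ≤ 3 → ((⊤ : G.Subgraph).deleteVerts S).coe.Connected



/-- An orthogonal curve: a simple polyline consisting of `k` nondegenerate axis-parallel
segments, with consecutive segments alternating between horizontal and vertical
(so that the number of bends is `k - 1`). -/
structure OrthoCurve where
  k : ℕ
  kpos : 0 < k
  pts : Fin (k + 1) → Pt
  axisAligned : ∀ i : Fin k,
    (pts i.castSucc).1 = (pts i.succ).1 ∨ (pts i.castSucc).2 = (pts i.succ).2
  nondegen : ∀ i : Fin k, pts i.castSucc ≠ pts i.succ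
  alternating : ∀ i j : Fin k, (j : ℕ) = (i : ℕ) + 1 →
    ((pts i.castSucc).1 = (pts i.succ).1 ↔ (pts j.castSucc).2 = (pts j.succ).2)
  simple : ∀ i j : Fin k, (i : ℕ) < (j : ℕ) →
    segment ℝ (pts i.castSucc) (pts i.succ) ∩ segment ℝ (pts j.castSucc) (pts j.succ) ⊆
      (if (i : ℕ) + 1 = (j : ℕ) then ({pts i.succ} : Set Pt) else (∅ : Set Pt))

/-- The image (trace) of an orthogonal curve. -/
def OrthoCurve.img (c : OrthoCurve) : Set Pt :=
  ⋃ i : Fin c.k, segment ℝ (c.pts i.castSucc) (c.pts i.succ)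

/-- The `i`-th segment of the curve is vertical. -/
def OrthoCurve.Vert (c : OrthoCurve) (i : Fin c.k) : Prop :=
  (c.pts i.castSucc).1 = (c.pts i.succ).1

/-- The number of bends of an orthogonal curve (with alternating segments). -/
def OrthoCurve.bends (c : OrthoCurve) : ℕ := c.k - 1

/-- A CZ-curve: an orthogonal curve with at most two bends and at most one vertical
segment. -/
def IsCZ (c : OrthoCurve) : Prop :=
  c.bends ≤ 2 ∧ {i : Fin c.k | c.Vert i}.ncard ≤ 1

/-- A B₂-curve: an orthogonal curve with at most two bends. -/
def IsB2 (c : OrthoCurve) : Prop := c.bends ≤ 2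

/-- Two orthogonal curves cross at a point `p`: `p` lies in the relative interior of a
segment of each, one of the two segments being horizontal and the other vertical. -/
def CrossAt (c d : OrthoCurve) (p : Pt) : Prop :=
  ∃ (i : Fin c.k) (j : Fin d.k),
    p ∈ openSegment ℝ (c.pts i.castSucc) (c.pts i.succ) ∧
    p ∈ openSegment ℝ (d.pts j.castSucc) (d.pts j.succ) ∧
    (c.Vert i ↔ ¬ d.Vert j)

/-- A 1-string representation of `G` by orthogonal curves of shape `P`: every vertex
carries a curve satisfying `P`, two curves intersect in at most one point, at which
they cross, and curves intersect iff the corresponding vertices are adjacent. -/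
structure OneStringRep {V : Type*} (G : SimpleGraph V) (P : OrthoCurve → Prop) where
  curve : V → OrthoCurve
  shape : ∀ v : V, P (curve v)
  atMostOne : ∀ u v : V, u ≠ v → ((curve u).img ∩ (curve v).img).Subsingleton
  crossing : ∀ u v : V, u ≠ v → ∀ p ∈ (curve u).img ∩ (curve v).img,
    CrossAt (curve u) (curve v) p
  adj_iff : ∀ u v : V, u ≠ v →
    (((curve u).img ∩ (curve v).img).Nonempty ↔ G.Adj u v)

/-- The image of a plane drawing: all vertex points and all arcs. -/
def PlaneDrawing.img {V : Type*} {G : SimpleGraph V} (D : PlaneDrawing G) : Set Pt :=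
  Set.range D.vpos ∪ ⋃ e : G.edgeSet, (D.arc e).img

/-- A face of a plane drawing: a connected component of the complement of the drawing. -/
def IsFaceOf {V : Type*} {G : SimpleGraph V} (D : PlaneDrawing G) (F : Set Pt) : Prop :=
  ∃ p ∈ D.imgᶜ, F = connectedComponentIn D.imgᶜ p

/-- The outer (unbounded) face of a plane drawing. -/
def PlaneDrawing.outerFace {V : Type*} {G : SimpleGraph V} (D : PlaneDrawing G) : Set Pt :=
  {p | p ∈ D.imgᶜ ∧ ¬ Bornology.IsBounded (connectedComponentIn D.imgᶜ p)}

/-- The points strictly inside a closed curve (Jordan curve) `J`. -/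
def insideOf (J : Set Pt) : Set Pt :=
  {p | p ∉ J ∧ Bornology.IsBounded (connectedComponentIn Jᶜ p)}

/-- The points strictly outside a closed curve `J`. -/
def outsideOf (J : Set Pt) : Set Pt :=
  {p | p ∉ J ∧ ¬ Bornology.IsBounded (connectedComponentIn Jᶜ p)}

/-- The arc of the edge `(u,v)` in a drawing. -/
def PlaneDrawing.earc {V : Type*} {G : SimpleGraph V} (D : PlaneDrawing G) {u v : V}
    (h : G.Adj u v) : Arc :=
  D.arc ⟨s(u, v), (G.mem_edgeSet).mpr h⟩

/-- The closed curve formed by the three arcs of a triangle `u,v,w` of `G`. -/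
def triCurve {V : Type*} {G : SimpleGraph V} (D : PlaneDrawing G) {u v w : V}
    (h1 : G.Adj u v) (h2 : G.Adj v w) (h3 : G.Adj w u) : Set Pt :=
  (D.earc h1).img ∪ (D.earc h2).img ∪ (D.earc h3).img

/-- The drawing has a separating triangle: a 3-cycle with at least one vertex drawn
inside it and at least one vertex drawn outside it. -/
def HasSepTriangle {V : Type*} {G : SimpleGraph V} (D : PlaneDrawing G) : Prop :=
  ∃ (u v w : V) (h1 : G.Adj u v) (h2 : G.Adj v w) (h3 : G.Adj w u),
    (∃ x : V, D.vpos x ∈ insideOf (triCurve D h1 h2 h3)) ∧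
    (∃ y : V, D.vpos y ∈ outsideOf (triCurve D h1 h2 h3))

/-- A face is bounded by a triangle of the graph. -/
def FaceIsTriangle {V : Type*} {G : SimpleGraph V} (D : PlaneDrawing G) (F : Set Pt) : Prop :=
  ∃ (u v w : V) (h1 : G.Adj u v) (h2 : G.Adj v w) (h3 : G.Adj w u),
    frontier F = triCurve D h1 h2 h3

/-- A planar triangulation: a plane graph in which every face, including the outer
face, is bounded by a triangle. -/
structure PlaneTriangulation (V : Type*) where
  G : SimpleGraph V
  D : PlaneDrawing G
  faces_tri : ∀ F : Set Pt, IsFaceOf D F → FaceIsTriangle D F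

/-- The cyclically consecutive pairs of a list, as edges. -/
def outerEdges {V : Type*} (l : List V) : Set (Sym2 V) :=
  {e | ∃ i j : Fin l.length, ((i : ℕ) + 1) % l.length = (j : ℕ) ∧ e = s(l.get i, l.get j)}

/-- A triangulated disk: a 2-connected plane graph, given together with the cyclic list
of vertices of its outer face in counterclockwise order, in which every interior
(bounded) face is a triangle. -/
structure TriDisk (V : Type*) [Finite V] where
  G : SimpleGraph V
  D : PlaneDrawing G
  card3 : 3 ≤ Nat.card V
  conn2 : ∀ x : V, ((⊤ : G.Subgraph).deleteVerts {x}).coe.Connected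
  outer : List V
  nodup : outer.Nodup
  len3 : 3 ≤ outer.length
  outer_adj : ∀ i j : Fin outer.length, ((i : ℕ) + 1) % outer.length = (j : ℕ) →
    G.Adj (outer.get i) (outer.get j)
  outer_frontier : frontier D.outerFace =
    ⋃ (e : G.edgeSet) (_ : (e : Sym2 V) ∈ outerEdges outer), (D.arc e).img
  interior_tri : ∀ F : Set Pt, IsFaceOf D F → Bornology.IsBounded F → FaceIsTriangle D F

/-- A W-triangulation: a triangulated disk with no separating triangle. -/
def TriDisk.IsW {V : Type*} [Finite V] (T : TriDisk V) : Prop := ¬ HasSepTriangle T.D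

/-- A chord of a triangulated disk: an interior edge with both endpoints on the
outer face. -/
def TriDisk.IsChord {V : Type*} [Finite V] (T : TriDisk V) (u v : V) : Prop :=
  T.G.Adj u v ∧ u ∈ T.outer ∧ v ∈ T.outer ∧ s(u, v) ∉ outerEdges T.outer

/-- `ccwPath l X Y`: the path along the (counterclockwise) cyclic list `l` from `X`
counterclockwise to `Y`, both inclusive. -/
def ccwPath {V : Type*} [DecidableEq V] (l : List V) (X Y : V) : List V :=
  ((l.rotate (l.idxOf X)).takeWhile (fun z => decide (z ≠ Y))) ++ [Y]

/-- `A`, `B`, `C` are distinct members of the cyclic list `l` appearing in this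
(counterclockwise) cyclic order. -/
def CcwOrder {V : Type*} [DecidableEq V] (l : List V) (A B C : V) : Prop :=
  A ∈ l ∧ B ∈ l ∧ C ∈ l ∧ A ≠ B ∧ B ≠ C ∧ A ≠ C ∧
  (l.rotate (l.idxOf A)).idxOf B < (l.rotate (l.idxOf A)).idxOf C

/-- The chord condition for a triangulated disk with corners `A`, `B`, `C`:
the corners lie on the outer face in counterclockwise order and no chord has both
endpoints on `P_{AB}`, both on `P_{BC}`, or both on `P_{CA}`. -/
def ChordCond {V : Type*} [Finite V] [DecidableEq V] (T : TriDisk V) (A B C : V) : Prop :=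
  CcwOrder T.outer A B C ∧
  ∀ u v : V, T.IsChord u v →
    (¬ (u ∈ ccwPath T.outer A B ∧ v ∈ ccwPath T.outer A B)) ∧
    (¬ (u ∈ ccwPath T.outer B C ∧ v ∈ ccwPath T.outer B C)) ∧
    (¬ (u ∈ ccwPath T.outer C A ∧ v ∈ ccwPath T.outer C A))


/-- The closed curve traced by the arcs of the (cyclically consecutive) edges of the
cycle given by the list `l`. -/
def listCycleCurve {V : Type*} {G : SimpleGraph V} (D : PlaneDrawing G) (l : List V) : Set Pt :=
  ⋃ (e : G.edgeSet) (_ : (e : Sym2 V) ∈ outerEdges l), (D.arc e).img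

/-- The vertices drawn on or inside the cycle `l`. -/
def enclosed {V : Type*} {G : SimpleGraph V} (D : PlaneDrawing G) (l : List V) : Set V :=
  {x | D.vpos x ∈ listCycleCurve D l ∨ D.vpos x ∈ insideOf (listCycleCurve D l)}

/-- `u` and `v` are joined by an edge of `G` drawn on or inside the cycle `l`. -/
def encAdj {V : Type*} {G : SimpleGraph V} (D : PlaneDrawing G) (l : List V) (u v : V) : Prop :=
  ∃ h : G.Adj u v,
    (D.earc h).img ⊆ listCycleCurve D l ∪ insideOf (listCycleCurve D l)


/-- The point at angle `θ` on the circle of radius `ε` around `s`. -/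
noncomputable def circlePt (s : Pt) (ε θ : ℝ) : Pt :=
  (s.1 + ε * Real.cos θ, s.2 + ε * Real.sin θ)

/-- Two simple curves cross at `s`: `s` is a point internal to both of them, and for
every sufficiently small circle around `s`, each curve meets the circle in exactly
two points, and the four points alternate (first curve, second curve, first curve,
second curve) in cyclic order around the circle. -/
def CrossesAt (a b : Arc) (s : Pt) : Prop :=
  s ∈ a.img ∧ s ∈ b.img ∧ s ∉ a.ends ∧ s ∉ b.ends ∧
  ∃ ε₀ > (0 : ℝ), ∀ ε : ℝ, 0 < ε → ε ≤ ε₀ →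
    ∃ θ : Fin 4 → ℝ, StrictMono θ ∧ θ 3 < θ 0 + 2 * Real.pi ∧
      a.img ∩ Metric.sphere s ε = {circlePt s ε (θ 0), circlePt s ε (θ 2)} ∧
      b.img ∩ Metric.sphere s ε = {circlePt s ε (θ 1), circlePt s ε (θ 3)}

/-- A 1-string representation of `G`: every vertex carries a simple curve, two curves
intersect in at most one point, at which they cross, and curves intersect iff the
corresponding vertices are adjacent. -/
structure StringRep1 {V : Type*} (G : SimpleGraph V) where
  curve : V → Arc
  atMostOne : ∀ u v : V, u ≠ v → ((curve u).img ∩ (curve v).img).Subsingleton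
  crossing : ∀ u v : V, u ≠ v → ∀ s ∈ (curve u).img ∩ (curve v).img,
    CrossesAt (curve u) (curve v) s
  adj_iff : ∀ u v : V, u ≠ v →
    (((curve u).img ∩ (curve v).img).Nonempty ↔ G.Adj u v)


/-- `v` is drawn on the boundary of the outer face of the drawing `D`. -/
def OnOuter {V : Type*} {G : SimpleGraph V} (D : PlaneDrawing G) (v : V) : Prop :=
  D.vpos v ∈ frontier D.outerFace

/-- An `int`-`F`-CZ-representation (in the generalized form): a 1-string representation
of `G` by CZ-curves in which curves `𝐮`, `𝐯` intersect (exactly once, crossing) iff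
`s(u,v) ∈ Req` (`Req` being the interior edges together with the special edges `F`);
moreover there is a rectangle `Θ` containing all intersections whose top side is
crossed, from right to left in order, by the curves of the vertices of the list `PAB`,
and whose bottom side is crossed, from left to right in order, by the curves of the
vertices of the list `PBA`; and the curve of every vertex of `Outer` (the outer face
vertices) has at most one bend. -/
structure IntCZRep {V : Type*} (G : SimpleGraph V) (Req : Set (Sym2 V))
    (PAB PBA : List V) (Outer : Set V) where
  curve : V → OrthoCurve
  cz : ∀ v : V, IsCZ (curve v)
  atMostOne : ∀ u v : V, u ≠ v → ((curve u).img ∩ (curve v).img).Subsingleton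
  crossing : ∀ u v : V, u ≠ v → ∀ p ∈ (curve u).img ∩ (curve v).img,
    CrossAt (curve u) (curve v) p
  req_iff : ∀ u v : V, u ≠ v →
    (((curve u).img ∩ (curve v).img).Nonempty ↔ s(u, v) ∈ Req)
  outer_bends : ∀ v ∈ Outer, (curve v).bends ≤ 1
  box : ∃ x₀ x₁ y₀ y₁ : ℝ, x₀ < x₁ ∧ y₀ < y₁ ∧
    (∀ u v : V, u ≠ v → (curve u).img ∩ (curve v).img ⊆ Set.Ioo x₀ x₁ ×ˢ Set.Ioo y₀ y₁) ∧
    (∃ xs : Fin PAB.length → ℝ, StrictAnti xs ∧ (∀ i, xs i ∈ Set.Ioo x₀ x₁) ∧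
      ∀ i, ((xs i, y₁) : Pt) ∈ (curve (PAB.get i)).img) ∧
    (∃ ys : Fin PBA.length → ℝ, StrictMono ys ∧ (∀ i, ys i ∈ Set.Ioo x₀ x₁) ∧
      ∀ i, ((ys i, y₀) : Pt) ∈ (curve (PBA.get i)).img)

/-- The subgraph of `T` on the vertex set `S`, with adjacency specified by `adjSpec`
and outer boundary (in counterclockwise order) satisfying `bdry`, inherits the drawing
of `T`, is a W-triangulation, and satisfies the chord condition with respect to the
corners `X`, `Y`, `Z`. -/
def PieceOn {V : Type*} [Finite V] [DecidableEq V] (T : TriDisk V) (S : Set V)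
    (adjSpec : V → V → Prop) (bdry : List V → Prop) (X Y Z : V) : Prop :=
  ∃ T1 : TriDisk ↥S,
    (∀ x y : ↥S, T1.G.Adj x y ↔ adjSpec ↑x ↑y) ∧
    (∀ x : ↥S, T1.D.vpos x = T.D.vpos ↑x) ∧
    (∀ e1 : T1.G.edgeSet, ∃ e : T.G.edgeSet,
      (e : Sym2 V) = Sym2.map Subtype.val (e1 : Sym2 ↥S) ∧
      (T1.D.arc e1).img = (T.D.arc e).img) ∧
    bdry (T1.outer.map Subtype.val) ∧
    T1.IsW ∧
    ∃ (hX : X ∈ S) (hY : Y ∈ S) (hZ : Z ∈ S),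
      ChordCond T1 ⟨X, hX⟩ ⟨Y, hY⟩ ⟨Z, hZ⟩

/-- The piece of `T` obtained when splitting along a chord: the subgraph induced by
the vertices on or inside the cycle `l`, with outer boundary `l`, is a W-triangulation
satisfying the chord condition with respect to the corners `X`, `Y`, `Z`. -/
def SplitPiece {V : Type*} [Finite V] [DecidableEq V] (T : TriDisk V) (l : List V)
    (X Y Z : V) : Prop :=
  PieceOn T (enclosed T.D l) (fun u v => T.G.Adj u v) (fun ol => ol = l) X Y Z

/-- The subgraph of `T` bounded by the cycle `l` (all vertices and edges drawn on or
inside `l`), with outer boundary `l`, is a W-triangulation satisfying the chord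
condition with respect to the corners `X`, `Y`, `Z`. -/
def BoundedPiece {V : Type*} [Finite V] [DecidableEq V] (T : TriDisk V) (l : List V)
    (X Y Z : V) : Prop :=
  PieceOn T (enclosed T.D l) (encAdj T.D l) (fun ol => ol = l) X Y Z



/-! ### Auxiliary lemmas -/

section AuxList

variable {α : Type*} [DecidableEq α]

lemma aux_takeWhile_ne_eq_take (l : List α) (y : α) :
    l.takeWhile (fun z => decide (z ≠ y)) = l.take (l.idxOf y) := by
  induction l with
  | nil => simp
  | cons a t ih =>
    by_cases h : a = y
    · subst h
      simp [List.takeWhile_cons, List.idxOf_cons]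
    · have hb : (a == y) = false := beq_false_of_ne h
      simp only [ne_eq, decide_not] at ih
      simp only [List.takeWhile_cons, List.idxOf_cons, hb, cond_false, List.take_succ_cons,
        decide_not, beq_iff_eq, h, decide_false, Bool.not_false, if_true]
      rw [ih]

lemma aux_ccwPath_eq_take (l : List α) (X Y : α)
    (hY : Y ∈ l.rotate (l.idxOf X)) :
    ccwPath l X Y
      = (l.rotate (l.idxOf X)).take ((l.rotate (l.idxOf X)).idxOf Y + 1) := by
  have hlt := List.idxOf_lt_length_iff.mpr hY
  rw [ccwPath, aux_takeWhile_ne_eq_take, List.take_succ,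
    List.getElem?_eq_getElem hlt, List.getElem_idxOf hlt]
  rfl

lemma aux_outerEdges_triple (a b c : α) :
    outerEdges [a, b, c] = {s(a, b), s(b, c), s(c, a)} := by
  ext e
  constructor
  · rintro ⟨i, j, hij, rfl⟩
    fin_cases i <;> fin_cases j <;> simp_all
  · intro he
    simp only [Set.mem_insert_iff, Set.mem_singleton_iff] at he
    rcases he with rfl | rfl | rfl
    · exact ⟨⟨0, by norm_num⟩, ⟨1, by norm_num⟩, by norm_num, rfl⟩
    · exact ⟨⟨1, by norm_num⟩, ⟨2, by norm_num⟩, by norm_num, rfl⟩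
    · exact ⟨⟨2, by norm_num⟩, ⟨0, by norm_num⟩, by norm_num, rfl⟩

end AuxList

section AuxArc

variable {V : Type*} {G : SimpleGraph V}

lemma aux_arc_img_compact (a : Arc) : IsCompact a.img :=
  isCompact_Icc.image_of_continuousOn a.cont

lemma aux_mem_img_zero (a : Arc) : a.f 0 ∈ a.img := ⟨0, by norm_num, rfl⟩

lemma aux_mem_img_one (a : Arc) : a.f 1 ∈ a.img := ⟨1, by norm_num, rfl⟩

lemma aux_vpos_mem_arc (D : PlaneDrawing G) {u v : V} (e : G.edgeSet)
    (he : (e : Sym2 V) = s(u, v)) :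
    D.vpos u ∈ (D.arc e).img ∧ D.vpos v ∈ (D.arc e).img := by
  obtain ⟨a, b, hab, h0, h1⟩ := D.arc_ends e
  rw [he] at hab
  have m0 : D.vpos a ∈ (D.arc e).img := h0 ▸ aux_mem_img_zero _
  have m1 : D.vpos b ∈ (D.arc e).img := h1 ▸ aux_mem_img_one _
  rcases Sym2.eq_iff.mp hab with ⟨rfl, rfl⟩ | ⟨rfl, rfl⟩
  · exact ⟨m0, m1⟩
  · exact ⟨m1, m0⟩

lemma aux_vertex_on_arc (D : PlaneDrawing G) {u v : V} (e : G.edgeSet)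
    (he : (e : Sym2 V) = s(u, v)) (w : V) (hw : D.vpos w ∈ (D.arc e).img) :
    w = u ∨ w = v := by
  have hend := D.vertex_arc e w hw
  obtain ⟨a, b, hab, h0, h1⟩ := D.arc_ends e
  rw [he] at hab
  rw [Arc.ends, h0, h1] at hend
  simp only [Set.mem_insert_iff, Set.mem_singleton_iff] at hend
  have key : w = a ∨ w = b := by
    rcases hend with h | h
    · exact Or.inl (D.vpos_inj h)
    · exact Or.inr (D.vpos_inj h)
  rcases Sym2.eq_iff.mp hab with ⟨rfl, rfl⟩ | ⟨rfl, rfl⟩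
  · exact key
  · exact key.symm

end AuxArc

lemma aux_getElem_congr {α : Type*} {l : List α} {i j : ℕ} (h : i = j)
    {hi : i < l.length} {hj : j < l.length} : l[i]'hi = l[j]'hj := by
  subst h; rfl

section AuxBlock

lemma aux_block_edge {V : Type*} [Finite V] [DecidableEq V] (T : TriDisk V) (hW : T.IsW)
    (ti ti1 uj B : V)
    (h1 : T.G.Adj ti ti1) (h2 : T.G.Adj ti1 uj) (h3 : T.G.Adj uj ti)
    (hB1 : B ≠ ti) (hB2 : B ≠ ti1) (hB3 : B ≠ uj) (hBout : B ∈ T.outer) :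
    enclosed T.D [ti, ti1, uj] \ {uj} = {ti, ti1} := by
  classical
  set J : Set Pt := listCycleCurve T.D [ti, ti1, uj] with hJ
  set e1 : T.G.edgeSet := ⟨s(ti, ti1), (T.G.mem_edgeSet).mpr h1⟩ with he1
  set e2 : T.G.edgeSet := ⟨s(ti1, uj), (T.G.mem_edgeSet).mpr h2⟩ with he2
  set e3 : T.G.edgeSet := ⟨s(uj, ti), (T.G.mem_edgeSet).mpr h3⟩ with he3
  -- J is the triangle curve
  have eq_tri : J = triCurve T.D h1 h2 h3 := by
    rw [hJ, listCycleCurve, triCurve]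
    ext p
    simp only [Set.mem_iUnion, Set.mem_union, PlaneDrawing.earc]
    constructor
    · rintro ⟨e, he, hp⟩
      rw [aux_outerEdges_triple] at he
      simp only [Set.mem_insert_iff, Set.mem_singleton_iff] at he
      rcases he with h | h | h
      · exact Or.inl (Or.inl (by rwa [show e = e1 from Subtype.ext h] at hp))
      · exact Or.inl (Or.inr (by rwa [show e = e2 from Subtype.ext h] at hp))
      · exact Or.inr (by rwa [show e = e3 from Subtype.ext h] at hp)
    · rintro ((hp | hp) | hp)
      · exact ⟨e1, by rw [aux_outerEdges_triple]; simp [he1], hp⟩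
      · exact ⟨e2, by rw [aux_outerEdges_triple]; simp [he2], hp⟩
      · exact ⟨e3, by rw [aux_outerEdges_triple]; simp [he3], hp⟩
  -- vertices on J are among the triangle corners
  have on_curve : ∀ w : V, T.D.vpos w ∈ J → w = ti ∨ w = ti1 ∨ w = uj := by
    intro w hw
    rw [eq_tri, triCurve] at hw
    simp only [Set.mem_union, PlaneDrawing.earc] at hw
    rcases hw with (hw | hw) | hw
    · rcases aux_vertex_on_arc T.D e1 rfl w hw with h | h
      · exact Or.inl h
      · exact Or.inr (Or.inl h)
    · rcases aux_vertex_on_arc T.D e2 rfl w hw with h | h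
      · exact Or.inr (Or.inl h)
      · exact Or.inr (Or.inr h)
    · rcases aux_vertex_on_arc T.D e3 rfl w hw with h | h
      · exact Or.inr (Or.inr h)
      · exact Or.inl h
  -- J is closed
  have closed_J : IsClosed J := by
    rw [eq_tri, triCurve]
    exact (((aux_arc_img_compact _).union (aux_arc_img_compact _)).union
      (aux_arc_img_compact _)).isClosed
  -- J is contained in the drawing
  have sub_img : J ⊆ T.D.img := by
    rw [eq_tri, triCurve, PlaneDrawing.img]
    intro p hp
    rcases hp with (hp | hp) | hp
    · exact Or.inr (Set.mem_iUnion.mpr ⟨_, hp⟩)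
    · exact Or.inr (Set.mem_iUnion.mpr ⟨_, hp⟩)
    · exact Or.inr (Set.mem_iUnion.mpr ⟨_, hp⟩)
  -- B is not on J
  have B_not_on : T.D.vpos B ∉ J := by
    intro h
    rcases on_curve B h with h | h | h
    exacts [hB1 h, hB2 h, hB3 h]
  -- B is on the frontier of the outer face
  have n0 : 0 < T.outer.length := by have := T.len3; omega
  obtain ⟨qB, hqB, hgB⟩ := List.mem_iff_getElem.mp hBout
  have hj : (qB + 1) % T.outer.length < T.outer.length := Nat.mod_lt _ n0
  have hadj := T.outer_adj ⟨qB, hqB⟩ ⟨(qB + 1) % T.outer.length, hj⟩ rfl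
  set e4 : T.G.edgeSet := ⟨s(T.outer.get ⟨qB, hqB⟩,
    T.outer.get ⟨(qB + 1) % T.outer.length, hj⟩), (T.G.mem_edgeSet).mpr hadj⟩ with he4
  have hOE : (e4 : Sym2 V) ∈ outerEdges T.outer :=
    ⟨⟨qB, hqB⟩, ⟨(qB + 1) % T.outer.length, hj⟩, rfl, rfl⟩
  have B_front : T.D.vpos B ∈ frontier T.D.outerFace := by
    rw [T.outer_frontier]
    refine Set.mem_iUnion.mpr ⟨e4, Set.mem_iUnion.mpr ⟨hOE, ?_⟩⟩
    have := (aux_vpos_mem_arc T.D e4 rfl).1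
    simpa [List.get_eq_getElem, hgB] using this
  -- B is outside J
  have B_outside : T.D.vpos B ∈ outsideOf J := by
    refine ⟨B_not_on, ?_⟩
    obtain ⟨r, hr0, hball⟩ := Metric.isOpen_iff.mp closed_J.isOpen_compl _ B_not_on
    have hcl : T.D.vpos B ∈ closure T.D.outerFace := frontier_subset_closure B_front
    obtain ⟨p, hpF, hdist⟩ := Metric.mem_closure_iff.mp hcl r hr0
    have hpball : p ∈ Metric.ball (T.D.vpos B) r := by
      rw [Metric.mem_ball, dist_comm]; exact hdist
    have hsame : p ∈ connectedComponentIn Jᶜ (T.D.vpos B) :=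
      (convex_ball _ _).isPreconnected.subset_connectedComponentIn
        (Metric.mem_ball_self hr0) hball hpball
    have heq := connectedComponentIn_eq hsame
    have hmono : connectedComponentIn T.D.imgᶜ p ⊆ connectedComponentIn Jᶜ p :=
      connectedComponentIn_mono p (Set.compl_subset_compl.mpr sub_img)
    intro hb
    exact hpF.2 (hb.subset (heq ▸ hmono))
  -- no vertex is strictly inside J
  have no_inside : ∀ x : V, T.D.vpos x ∉ insideOf J := by
    intro x hx
    exact hW ⟨ti, ti1, uj, h1, h2, h3, ⟨x, eq_tri ▸ hx⟩, ⟨B, eq_tri ▸ B_outside⟩⟩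
  -- conclude
  have ti_ne : ti ≠ uj := h3.ne'
  have ti1_ne : ti1 ≠ uj := h2.ne
  have ti_mem : T.D.vpos ti ∈ J := by
    rw [eq_tri, triCurve]
    exact Or.inl (Or.inl (aux_vpos_mem_arc T.D e1 rfl).1)
  have ti1_mem : T.D.vpos ti1 ∈ J := by
    rw [eq_tri, triCurve]
    exact Or.inl (Or.inl (aux_vpos_mem_arc T.D e1 rfl).2)
  ext v
  simp only [Set.mem_diff, Set.mem_singleton_iff, Set.mem_insert_iff]
  constructor
  · rintro ⟨henc, hvuj⟩
    rcases henc with h | h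
    · rcases on_curve v h with h' | h' | h'
      · exact Or.inl h'
      · exact Or.inr h'
      · exact absurd h' hvuj
    · exact absurd h (no_inside v)
  · rintro (rfl | rfl)
    · exact ⟨Or.inl ti_mem, ti_ne⟩
    · exact ⟨Or.inl ti1_mem, ti1_ne⟩

end AuxBlock
/-- In the setup of the chordless case, the corners of each
non-edge block are pairwise distinct: if the `i`-th block `G_i` is not a single
edge, then `t_i`, `t_{i+1}` and the successor `C'` of `t_i` on `P_{t_i t_{i+1}}` are
three distinct vertices; in particular, `(t_i, t_{i+1})` is not an edge of `G`
(otherwise `{u_j, t_i, t_{i+1}}` would be a separating triangle of `G`). -/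
theorem chordless_case_block_corners_distinct
    {V : Type*} [Finite V] [DecidableEq V]
    (T : TriDisk V) (hW : T.IsW)
    (A B C : V) (hcc : ChordCond T A B C)
    (hnochord : ∀ u v : V, ¬ T.IsChord u v)
    (nbrs : List V) (hnd : nbrs.Nodup)
    (hmem : ∀ x : V, x ∈ nbrs ↔ T.G.Adj C x)
    (hhead : nbrs.head? = (ccwPath T.outer B C)[(ccwPath T.outer B C).length - 2]?)
    (hlast : nbrs.getLast? = (ccwPath T.outer C A)[1]?)
    (hfaces : ∀ i : ℕ, (hi : i + 1 < nbrs.length) →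
      ∃ (h1 : T.G.Adj C (nbrs.get ⟨i, by omega⟩))
        (h2 : T.G.Adj (nbrs.get ⟨i, by omega⟩) (nbrs.get ⟨i + 1, hi⟩))
        (h3 : T.G.Adj (nbrs.get ⟨i + 1, hi⟩) C),
        ∃ F : Set Pt, IsFaceOf T.D F ∧ Bornology.IsBounded F ∧
          frontier F = triCurve T.D h1 h2 h3)
    (jx : ℕ) (hjx0 : 0 < jx) (hjxq : jx + 1 < nbrs.length)
    (hjnbr : ∃ y ∈ ccwPath T.outer C A, y ≠ C ∧ T.G.Adj (nbrs.get ⟨jx, by omega⟩) y)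
    (hjmin : ∀ j' : ℕ, 0 < j' → (hj' : j' < jx) →
      ¬ ∃ y ∈ ccwPath T.outer C A, y ≠ C ∧ T.G.Adj (nbrs.get ⟨j', by omega⟩) y)
    (ts : List V) (hts_sub : ts.Sublist (ccwPath T.outer C A))
    (hts_mem : ∀ y : V, y ∈ ts ↔
      (y ∈ ccwPath T.outer C A ∧ T.G.Adj (nbrs.get ⟨jx, by omega⟩) y)) :
    ∀ (i : ℕ) (hi : i + 1 < ts.length) (ti ti1 uj : V),
      ti = ts.get ⟨i, by omega⟩ → ti1 = ts.get ⟨i + 1, hi⟩ →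
      uj = nbrs.get ⟨jx, by omega⟩ →
      ¬ (enclosed T.D (ccwPath T.outer ti ti1 ++ [uj]) \ {uj} = {ti, ti1} ∧
          T.G.Adj ti ti1) →
      ∃ hlen : 1 < (ccwPath T.outer ti ti1).length,
        (ccwPath T.outer ti ti1).get ⟨1, hlen⟩ ≠ ti ∧
        (ccwPath T.outer ti ti1).get ⟨1, hlen⟩ ≠ ti1 ∧
        ti ≠ ti1 ∧
        ¬ T.G.Adj ti ti1 := by

  classical
  intro i hi ti ti1 uj hti_eq hti1_eq huj_eq hne
  obtain ⟨hAm, hBm, hCm, hAB, hBC, hAC, hordA⟩ := hcc.1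
  have hndO : T.outer.Nodup := T.nodup
  have n3 : 3 ≤ T.outer.length := T.len3
  have n0 : 0 < T.outer.length := by omega
  have hiC : T.outer.idxOf C < T.outer.length := List.idxOf_lt_length_iff.mpr hCm
  have lenrC : (T.outer.rotate (T.outer.idxOf C)).length = T.outer.length :=
    List.length_rotate _ _
  have ndrC : (T.outer.rotate (T.outer.idxOf C)).Nodup := List.nodup_rotate.mpr hndO
  have hrC_get : ∀ (p : ℕ) (hp : p < T.outer.length),
      (T.outer.rotate (T.outer.idxOf C))[p]'(by omega)
        = T.outer[(p + T.outer.idxOf C) % T.outer.length]'(Nat.mod_lt _ n0) :=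
    fun p hp => List.getElem_rotate T.outer _ p (by omega)
  have hgetC : T.outer[T.outer.idxOf C]'hiC = C := List.getElem_idxOf hiC
  have hinj : ∀ (p q : ℕ) (hp : p < T.outer.length) (hq : q < T.outer.length),
      T.outer[p]'hp = T.outer[q]'hq → p = q := by
    intro p q hp hq h
    exact (List.Nodup.getElem_inj_iff hndO).mp h
  have hrC0 : (T.outer.rotate (T.outer.idxOf C))[0]'(by omega) = C := by
    rw [hrC_get 0 (by omega),
      aux_getElem_congr (by rw [Nat.zero_add, Nat.mod_eq_of_lt hiC])
      (hj := hiC)]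
    exact hgetC
  -- the path from C to A
  have hA_rC : A ∈ T.outer.rotate (T.outer.idxOf C) := List.mem_rotate.mpr hAm
  have hkAlt : (T.outer.rotate (T.outer.idxOf C)).idxOf A < T.outer.length := by
    have := List.idxOf_lt_length_iff.mpr hA_rC; omega
  have hrCkA : (T.outer.rotate (T.outer.idxOf C))[
      (T.outer.rotate (T.outer.idxOf C)).idxOf A]'(by omega) = A :=
    List.getElem_idxOf (by omega)
  have hkA1 : 1 ≤ (T.outer.rotate (T.outer.idxOf C)).idxOf A := by
    rcases Nat.eq_zero_or_pos ((T.outer.rotate (T.outer.idxOf C)).idxOf A) with h | h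
    · exact absurd (hrCkA.symm.trans ((aux_getElem_congr h).trans hrC0)) hAC
    · omega
  have hpathCA : ccwPath T.outer C A = (T.outer.rotate (T.outer.idxOf C)).take
      ((T.outer.rotate (T.outer.idxOf C)).idxOf A + 1) :=
    aux_ccwPath_eq_take _ _ _ hA_rC
  have hlenCA : (ccwPath T.outer C A).length
      = (T.outer.rotate (T.outer.idxOf C)).idxOf A + 1 := by
    rw [hpathCA, List.length_take]; omega
  -- positions of ti and ti1 along the path
  obtain ⟨is, hmap, hpw⟩ := List.sublist_eq_map_getElem hts_sub
  have hlen_ts : ts.length = is.length := by rw [hmap]; exact List.length_map _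
  have hii : i < is.length := by omega
  have hii1 : i + 1 < is.length := by omega
  have key : ∀ (m : ℕ) (hm : m < is.length),
      ts[m]'(by omega) = (ccwPath T.outer C A)[((is[m]'hm : Fin _) : ℕ)]'((is[m]'hm).isLt) := by
    intro m hm
    rw [List.getElem_of_eq hmap (by omega), List.getElem_map]; rfl
  have hpiA : ((is[i]'hii : Fin _) : ℕ)
      ≤ (T.outer.rotate (T.outer.idxOf C)).idxOf A := by
    have := (is[i]'hii).isLt; omega
  have hpi'A : ((is[i+1]'hii1 : Fin _) : ℕ)
      ≤ (T.outer.rotate (T.outer.idxOf C)).idxOf A := by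
    have := (is[i+1]'hii1).isLt; omega
  have hpilt : ((is[i]'hii : Fin _) : ℕ) < ((is[i+1]'hii1 : Fin _) : ℕ) := by
    have := List.pairwise_iff_getElem.mp hpw i (i+1) hii hii1 (by omega)
    exact Fin.lt_def.mp this
  set pi : ℕ := ((is[i]'hii : Fin _) : ℕ) with hpidef
  set pi' : ℕ := ((is[i+1]'hii1 : Fin _) : ℕ) with hpi'def
  have hpi_n : pi < T.outer.length := by omega
  have hpi'_n : pi' < T.outer.length := by omega
  have hti_path : ti = (ccwPath T.outer C A)[pi]'(by rw [hlenCA]; omega) := by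
    rw [hti_eq, List.get_eq_getElem]
    exact key i hii
  have hti1_path : ti1 = (ccwPath T.outer C A)[pi']'(by rw [hlenCA]; omega) := by
    rw [hti1_eq, List.get_eq_getElem]
    exact key (i+1) hii1
  have hti_rC : ti = (T.outer.rotate (T.outer.idxOf C))[pi]'(by omega) := by
    rw [hti_path, List.getElem_of_eq hpathCA]
    exact List.getElem_take
  have hti1_rC : ti1 = (T.outer.rotate (T.outer.idxOf C))[pi']'(by omega) := by
    rw [hti1_path, List.getElem_of_eq hpathCA]
    exact List.getElem_take
  have hti_l : ti = T.outer[(pi + T.outer.idxOf C) % T.outer.length]'(Nat.mod_lt _ n0) := by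
    rw [hti_rC, hrC_get pi hpi_n]
  have hti1_l : ti1 = T.outer[(pi' + T.outer.idxOf C) % T.outer.length]'(Nat.mod_lt _ n0) := by
    rw [hti1_rC, hrC_get pi' hpi'_n]
  have hti_mem : ti ∈ T.outer := by
    rw [hti_l]; exact List.getElem_mem _
  have hti1_mem : ti1 ∈ T.outer := by
    rw [hti1_l]; exact List.getElem_mem _
  have hiT : T.outer.idxOf ti = (pi + T.outer.idxOf C) % T.outer.length := by
    rw [hti_l]; exact List.Nodup.idxOf_getElem hndO _ _
  -- the rotation at ti
  have lenrT : (T.outer.rotate (T.outer.idxOf ti)).length = T.outer.length :=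
    List.length_rotate _ _
  have ndrT : (T.outer.rotate (T.outer.idxOf ti)).Nodup := List.nodup_rotate.mpr hndO
  have hrT_rC : ∀ (m : ℕ) (hm : m + pi < T.outer.length),
      (T.outer.rotate (T.outer.idxOf ti))[m]'(by omega)
        = (T.outer.rotate (T.outer.idxOf C))[m + pi]'(by omega) := by
    intro m hm
    rw [List.getElem_rotate T.outer _ m (by omega), hrC_get (m + pi) hm]
    exact aux_getElem_congr (by rw [hiT, Nat.add_mod_mod, Nat.add_assoc])
  have hrT_d : (T.outer.rotate (T.outer.idxOf ti))[pi' - pi]'(by omega) = ti1 := by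
    rw [hrT_rC (pi' - pi) (by omega), hti1_rC]
    exact aux_getElem_congr (by omega)
  have hti1_rT : ti1 ∈ T.outer.rotate (T.outer.idxOf ti) := List.mem_rotate.mpr hti1_mem
  have hdT_idx : (T.outer.rotate (T.outer.idxOf ti)).idxOf ti1 = pi' - pi := by
    have h := List.Nodup.idxOf_getElem ndrT (pi' - pi) (by omega)
    rw [hrT_d] at h; exact h
  have hpathT : ccwPath T.outer ti ti1
      = (T.outer.rotate (T.outer.idxOf ti)).take ((pi' - pi) + 1) := by
    have h := aux_ccwPath_eq_take T.outer ti ti1 hti1_rT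
    rw [hdT_idx] at h; exact h
  have hlenT : (ccwPath T.outer ti ti1).length = (pi' - pi) + 1 := by
    rw [hpathT, List.length_take]; omega
  have hlen1 : 1 < (ccwPath T.outer ti ti1).length := by omega
  have hget1 : (ccwPath T.outer ti ti1).get ⟨1, hlen1⟩
      = (T.outer.rotate (T.outer.idxOf C))[1 + pi]'(by omega) := by
    rw [List.get_eq_getElem, List.getElem_of_eq hpathT, List.getElem_take]
    exact hrT_rC 1 (by omega)
  rcases Nat.lt_or_ge (pi + 1) pi' with hcase | hcase
  · -- generic case: ti1 is not the outer successor of ti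
    refine ⟨hlen1, ?_, ?_, ?_, ?_⟩
    · intro h
      have := (List.Nodup.getElem_inj_iff ndrC).mp ((hget1.symm.trans h).trans hti_rC)
      omega
    · intro h
      have := (List.Nodup.getElem_inj_iff ndrC).mp ((hget1.symm.trans h).trans hti1_rC)
      omega
    · intro h
      have := (List.Nodup.getElem_inj_iff ndrC).mp ((hti_rC.symm.trans h).trans hti1_rC)
      omega
    · -- an edge (ti, ti1) would be a chord
      intro hAdj
      refine hnochord ti ti1 ⟨hAdj, hti_mem, hti1_mem, ?_⟩
      rintro ⟨⟨ix, hix⟩, ⟨jy, hjy⟩, hmod, heq⟩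
      simp only [List.get_eq_getElem] at heq hmod
      rw [hti_l, hti1_l] at heq
      rcases Sym2.eq_iff.mp heq with ⟨h1, h2⟩ | ⟨h1, h2⟩
      · have e1 : (pi + T.outer.idxOf C) % T.outer.length = ix := hinj _ _ _ _ h1
        have e2 : (pi' + T.outer.idxOf C) % T.outer.length = jy := hinj _ _ _ _ h2
        rw [← e1, ← e2, Nat.mod_add_mod] at hmod
        have hmod' : (pi + 1 + T.outer.idxOf C) % T.outer.length
            = (pi' + T.outer.idxOf C) % T.outer.length := by
          rw [show pi + 1 + T.outer.idxOf C = pi + T.outer.idxOf C + 1 by omega]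
          exact hmod
        have h3 : (pi + 1) % T.outer.length = pi' % T.outer.length :=
          Nat.ModEq.add_right_cancel' _ hmod'
        rw [Nat.mod_eq_of_lt (by omega), Nat.mod_eq_of_lt hpi'_n] at h3
        omega
      · have e1 : (pi + T.outer.idxOf C) % T.outer.length = jy := hinj _ _ _ _ h1
        have e2 : (pi' + T.outer.idxOf C) % T.outer.length = ix := hinj _ _ _ _ h2
        rw [← e1, ← e2, Nat.mod_add_mod] at hmod
        have hmod' : (pi' + 1 + T.outer.idxOf C) % T.outer.length
            = (pi + T.outer.idxOf C) % T.outer.length := by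
          rw [show pi' + 1 + T.outer.idxOf C = pi' + T.outer.idxOf C + 1 by omega]
          exact hmod
        have h3 : (pi' + 1) % T.outer.length = pi % T.outer.length :=
          Nat.ModEq.add_right_cancel' _ hmod'
        rcases Nat.lt_or_ge (pi' + 1) T.outer.length with hlt | hge
        · rw [Nat.mod_eq_of_lt hlt, Nat.mod_eq_of_lt hpi_n] at h3
          omega
        · -- wrap-around: ti = C, ti1 = A, and C would be the successor of A
          have hn' : pi' + 1 = T.outer.length := by omega
          have hpi0 : pi = 0 := by
            rw [hn', Nat.mod_self, Nat.mod_eq_of_lt hpi_n] at h3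
            omega
          have hkApi' : (T.outer.rotate (T.outer.idxOf C)).idxOf A = pi' := by omega
          have hti1A : ti1 = A :=
            hti1_rC.trans ((aux_getElem_congr (by omega)).trans hrCkA)
          have hiA : T.outer.idxOf A < T.outer.length := List.idxOf_lt_length_iff.mpr hAm
          have h8 : A = T.outer[(pi' + T.outer.idxOf C) % T.outer.length]'(Nat.mod_lt _ n0) :=
            hti1A ▸ hti1_l
          have hiAval : T.outer.idxOf A = (pi' + T.outer.idxOf C) % T.outer.length := by
            rw [h8]; exact List.Nodup.idxOf_getElem hndO _ _
          have lenrA : (T.outer.rotate (T.outer.idxOf A)).length = T.outer.length :=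
            List.length_rotate _ _
          have ndrA : (T.outer.rotate (T.outer.idxOf A)).Nodup := List.nodup_rotate.mpr hndO
          have hrA1 : (T.outer.rotate (T.outer.idxOf A))[1]'(by omega) = C := by
            rw [List.getElem_rotate T.outer _ 1 (by omega)]
            have hidx : (1 + T.outer.idxOf A) % T.outer.length = T.outer.idxOf C := by
              rw [hiAval, Nat.add_mod_mod,
                show 1 + (pi' + T.outer.idxOf C) = T.outer.length + T.outer.idxOf C by omega,
                Nat.add_mod_left, Nat.mod_eq_of_lt hiC]
            rw [aux_getElem_congr hidx (hj := hiC)]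
            exact hgetC
          have hidxC : (T.outer.rotate (T.outer.idxOf A)).idxOf C = 1 := by
            have h := List.Nodup.idxOf_getElem ndrA 1 (by omega)
            rw [hrA1] at h; exact h
          have hBrA : B ∈ T.outer.rotate (T.outer.idxOf A) := List.mem_rotate.mpr hBm
          have hidxB0 : (T.outer.rotate (T.outer.idxOf A)).idxOf B = 0 := by
            rw [hidxC] at hordA; omega
          have hB0 : (T.outer.rotate (T.outer.idxOf A))[0]'(by omega) = B := by
            have h := List.getElem_idxOf (List.idxOf_lt_length_iff.mpr hBrA)
            exact (aux_getElem_congr hidxB0.symm).trans h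
          have hA0 : (T.outer.rotate (T.outer.idxOf A))[0]'(by omega) = A := by
            rw [List.getElem_rotate T.outer _ 0 (by omega)]
            have hidx : (0 + T.outer.idxOf A) % T.outer.length = T.outer.idxOf A := by
              rw [Nat.zero_add, Nat.mod_eq_of_lt hiA]
            rw [aux_getElem_congr hidx (hj := hiA)]
            exact List.getElem_idxOf hiA
          exact hAB (by rw [← hA0, hB0])
  · -- edge case: ti1 is the outer successor of ti; the block would be a single edge
    exfalso
    have hpi1 : pi' = pi + 1 := by omega
    -- (ti, ti1) is an outer edge, hence an edge of G
    have hcond : ((pi + T.outer.idxOf C) % T.outer.length + 1) % T.outer.length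
        = (pi' + T.outer.idxOf C) % T.outer.length := by
      rw [Nat.mod_add_mod, hpi1,
        show pi + T.outer.idxOf C + 1 = pi + 1 + T.outer.idxOf C by omega]
    have h1 : T.G.Adj ti ti1 := by
      have h := T.outer_adj ⟨(pi + T.outer.idxOf C) % T.outer.length, Nat.mod_lt _ n0⟩
        ⟨(pi' + T.outer.idxOf C) % T.outer.length, Nat.mod_lt _ n0⟩ hcond
      simp only [List.get_eq_getElem] at h
      rw [hti_l, hti1_l]
      exact h
    -- uj is adjacent to ti and ti1
    have hti_ts : ti ∈ ts := by
      rw [hti_eq]; exact List.get_mem _ _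
    have hti1_ts : ti1 ∈ ts := by
      rw [hti1_eq]; exact List.get_mem _ _
    have h3 : T.G.Adj uj ti := by
      rw [huj_eq]; exact ((hts_mem ti).mp hti_ts).2
    have h2 : T.G.Adj ti1 uj := by
      have : T.G.Adj uj ti1 := by rw [huj_eq]; exact ((hts_mem ti1).mp hti1_ts).2
      exact this.symm
    -- uj is not an outer vertex
    have hujnbrs : uj ∈ nbrs := by rw [huj_eq]; exact List.get_mem _ _
    have hCuj : T.G.Adj C uj := (hmem uj).mp hujnbrs
    have hujjx : uj = nbrs[jx]'(by omega) := by
      rw [huj_eq]; rfl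
    have hujnot : uj ∉ T.outer := by
      intro hujout
      refine hnochord C uj ⟨hCuj, hCm, hujout, ?_⟩
      rintro ⟨⟨ix, hix⟩, ⟨jy, hjy⟩, hmod, heq⟩
      simp only [List.get_eq_getElem] at heq hmod
      rcases Sym2.eq_iff.mp heq with ⟨hc, hu⟩ | ⟨hc, hu⟩
      · -- uj would be the outer successor of C, i.e. the last neighbour
        have hixC : T.outer.idxOf C = ix := hinj _ _ _ _ (hgetC.trans hc)
        have hidx9 : jy = (1 + T.outer.idxOf C) % T.outer.length := by
          rw [← hmod, ← hixC, Nat.add_comm]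
        have hujval : uj = T.outer[(1 + T.outer.idxOf C) % T.outer.length]'(Nat.mod_lt _ n0) :=
          hu.trans (aux_getElem_congr hidx9)
        have hp1 : (ccwPath T.outer C A)[1]'(by rw [hlenCA]; omega)
            = T.outer[(1 + T.outer.idxOf C) % T.outer.length]'(Nat.mod_lt _ n0) :=
          (List.getElem_of_eq hpathCA (by rw [hlenCA]; omega)).trans
            ((List.getElem_take).trans (hrC_get 1 (by omega)))
        have hlast' : nbrs[nbrs.length - 1]'(by omega)
            = T.outer[(1 + T.outer.idxOf C) % T.outer.length]'(Nat.mod_lt _ n0) := by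
          have hl := hlast
          rw [List.getLast?_eq_getElem?, List.getElem?_eq_getElem (by omega : nbrs.length - 1 < nbrs.length),
            List.getElem?_eq_getElem (by rw [hlenCA]; omega : 1 < (ccwPath T.outer C A).length)] at hl
          exact (Option.some.inj hl).trans hp1
        have : nbrs[jx]'(by omega) = nbrs[nbrs.length - 1]'(by omega) := by
          rw [← hujjx, hujval, hlast']
        have := (List.Nodup.getElem_inj_iff hnd).mp this
        omega
      · -- uj would be the outer predecessor of C, i.e. the first neighbour
        have hjyC : T.outer.idxOf C = jy := hinj _ _ _ _ (hgetC.trans hc)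
        -- the path from B to C
        have hBrB : C ∈ T.outer.rotate (T.outer.idxOf B) := List.mem_rotate.mpr hCm
        have lenrB : (T.outer.rotate (T.outer.idxOf B)).length = T.outer.length :=
          List.length_rotate _ _
        have hkC : (T.outer.rotate (T.outer.idxOf B)).idxOf C < T.outer.length := by
          have := List.idxOf_lt_length_iff.mpr hBrB; omega
        have hiB : T.outer.idxOf B < T.outer.length := List.idxOf_lt_length_iff.mpr hBm
        have hgetB : T.outer[T.outer.idxOf B]'hiB = B := List.getElem_idxOf hiB
        have hrB0 : (T.outer.rotate (T.outer.idxOf B))[0]'(by omega) = B := by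
          rw [List.getElem_rotate T.outer _ 0 (by omega),
            aux_getElem_congr (by rw [Nat.zero_add, Nat.mod_eq_of_lt hiB]) (hj := hiB)]
          exact hgetB
        have hkC1 : 1 ≤ (T.outer.rotate (T.outer.idxOf B)).idxOf C := by
          rcases Nat.eq_zero_or_pos ((T.outer.rotate (T.outer.idxOf B)).idxOf C) with h | h
          · exfalso
            have hC0 : (T.outer.rotate (T.outer.idxOf B))[
                (T.outer.rotate (T.outer.idxOf B)).idxOf C]'(by omega) = C :=
              List.getElem_idxOf (by omega)
            exact hBC ((hC0.symm.trans ((aux_getElem_congr h).trans hrB0)).symm)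
          · exact h
        have hpathBC : ccwPath T.outer B C = (T.outer.rotate (T.outer.idxOf B)).take
            ((T.outer.rotate (T.outer.idxOf B)).idxOf C + 1) :=
          aux_ccwPath_eq_take _ _ _ hBrB
        have hlenBC : (ccwPath T.outer B C).length
            = (T.outer.rotate (T.outer.idxOf B)).idxOf C + 1 := by
          rw [hpathBC, List.length_take]; omega
        -- rotB[kC] = C
        have hkCB : ((T.outer.rotate (T.outer.idxOf B)).idxOf C + T.outer.idxOf B)
            % T.outer.length = T.outer.idxOf C := by
          have h0 : (T.outer.rotate (T.outer.idxOf B))[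
              (T.outer.rotate (T.outer.idxOf B)).idxOf C]'(by omega) = C :=
            List.getElem_idxOf (by omega)
          rw [List.getElem_rotate T.outer _ _ (by omega)] at h0
          exact hinj _ _ (Nat.mod_lt _ n0) hiC (h0.trans hgetC.symm)
        have hixval : ix = ((T.outer.rotate (T.outer.idxOf B)).idxOf C - 1
            + T.outer.idxOf B) % T.outer.length := by
          have h5 : (ix + 1) % T.outer.length
              = ((T.outer.rotate (T.outer.idxOf B)).idxOf C + T.outer.idxOf B)
                % T.outer.length := by
            rw [hmod, ← hjyC, hkCB]
          rw [show (T.outer.rotate (T.outer.idxOf B)).idxOf C + T.outer.idxOf B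
            = ((T.outer.rotate (T.outer.idxOf B)).idxOf C - 1 + T.outer.idxOf B) + 1
            by omega] at h5
          have h7 : ix % T.outer.length
              = ((T.outer.rotate (T.outer.idxOf B)).idxOf C - 1 + T.outer.idxOf B)
                % T.outer.length := Nat.ModEq.add_right_cancel' _ h5
          rw [Nat.mod_eq_of_lt hix] at h7
          exact h7
        -- hence uj is the first neighbour
        have hp2 : (ccwPath T.outer B C)[(ccwPath T.outer B C).length - 2]'(by rw [hlenBC]; omega)
            = (T.outer.rotate (T.outer.idxOf B))[
                (T.outer.rotate (T.outer.idxOf B)).idxOf C - 1]'(by omega) :=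
          (List.getElem_of_eq hpathBC (by rw [hlenBC]; omega)).trans
            ((List.getElem_take).trans (aux_getElem_congr (by rw [hlenBC]; omega)))
        have hhead' : nbrs[0]'(by omega)
            = (T.outer.rotate (T.outer.idxOf B))[
                (T.outer.rotate (T.outer.idxOf B)).idxOf C - 1]'(by omega) := by
          have hh := hhead
          rw [List.head?_eq_getElem?, List.getElem?_eq_getElem (by omega : 0 < nbrs.length),
            List.getElem?_eq_getElem
              (by rw [hlenBC]; omega : (ccwPath T.outer B C).length - 2 < (ccwPath T.outer B C).length)] at hh
          exact (Option.some.inj hh).trans hp2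
        have hujval : uj = nbrs[0]'(by omega) :=
          (hu.trans ((aux_getElem_congr hixval).trans
            ((List.getElem_rotate T.outer _ _ (by omega)).symm))).trans hhead'.symm
        have : nbrs[jx]'(by omega) = nbrs[0]'(by omega) := by
          rw [← hujjx, hujval]
        have := (List.Nodup.getElem_inj_iff hnd).mp this
        omega
    -- B is not on the path from C to A
    have hiA : T.outer.idxOf A < T.outer.length := List.idxOf_lt_length_iff.mpr hAm
    have h8 : A = T.outer[((T.outer.rotate (T.outer.idxOf C)).idxOf A
        + T.outer.idxOf C) % T.outer.length]'(Nat.mod_lt _ n0) :=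
      hrCkA.symm.trans (hrC_get _ (by omega))
    have hiAval : T.outer.idxOf A = ((T.outer.rotate (T.outer.idxOf C)).idxOf A
        + T.outer.idxOf C) % T.outer.length := by
      conv_lhs => rw [h8]
      exact List.Nodup.idxOf_getElem hndO _ _
    have lenrA : (T.outer.rotate (T.outer.idxOf A)).length = T.outer.length :=
      List.length_rotate _ _
    have ndrA : (T.outer.rotate (T.outer.idxOf A)).Nodup := List.nodup_rotate.mpr hndO
    have hBpath : B ∉ ccwPath T.outer C A := by
      intro hBp
      rw [hpathCA] at hBp
      obtain ⟨m, hm, hgm⟩ := List.mem_iff_getElem.mp hBp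
      rw [List.getElem_take] at hgm
      have hmlen : m < (T.outer.rotate (T.outer.idxOf C)).idxOf A + 1 := by
        rw [List.length_take] at hm; omega
      rcases Nat.lt_or_ge m ((T.outer.rotate (T.outer.idxOf C)).idxOf A) with hmlt | hmge
      · -- B strictly between C and A, contradicts the ccw order
        have h9 : (T.outer.rotate (T.outer.idxOf A))[
            T.outer.length - (T.outer.rotate (T.outer.idxOf C)).idxOf A]'(by omega) = C := by
          rw [List.getElem_rotate T.outer _ _ (by omega)]
          have hidx : (T.outer.length - (T.outer.rotate (T.outer.idxOf C)).idxOf A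
              + T.outer.idxOf A) % T.outer.length = T.outer.idxOf C := by
            rw [hiAval, Nat.add_mod_mod,
              show T.outer.length - (T.outer.rotate (T.outer.idxOf C)).idxOf A
                + ((T.outer.rotate (T.outer.idxOf C)).idxOf A + T.outer.idxOf C)
                = T.outer.length + T.outer.idxOf C by omega,
              Nat.add_mod_left, Nat.mod_eq_of_lt hiC]
          rw [aux_getElem_congr hidx (hj := hiC)]
          exact hgetC
        have hidxCrA : (T.outer.rotate (T.outer.idxOf A)).idxOf C
            = T.outer.length - (T.outer.rotate (T.outer.idxOf C)).idxOf A := by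
          have h := List.Nodup.idxOf_getElem ndrA _ (by omega :
            T.outer.length - (T.outer.rotate (T.outer.idxOf C)).idxOf A
              < (T.outer.rotate (T.outer.idxOf A)).length)
          rw [h9] at h; exact h
        have h10 : (T.outer.rotate (T.outer.idxOf A))[
            T.outer.length - (T.outer.rotate (T.outer.idxOf C)).idxOf A + m]'(by omega) = B := by
          rw [List.getElem_rotate T.outer _ _ (by omega)]
          have hidx : (T.outer.length - (T.outer.rotate (T.outer.idxOf C)).idxOf A + m
              + T.outer.idxOf A) % T.outer.length
              = (m + T.outer.idxOf C) % T.outer.length := by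
            rw [hiAval, Nat.add_mod_mod,
              show T.outer.length - (T.outer.rotate (T.outer.idxOf C)).idxOf A + m
                + ((T.outer.rotate (T.outer.idxOf C)).idxOf A + T.outer.idxOf C)
                = T.outer.length + (m + T.outer.idxOf C) by omega,
              Nat.add_mod_left]
          rw [aux_getElem_congr hidx (hj := Nat.mod_lt _ n0), ← hrC_get m (by omega)]
          exact hgm
        have hidxBrA : (T.outer.rotate (T.outer.idxOf A)).idxOf B
            = T.outer.length - (T.outer.rotate (T.outer.idxOf C)).idxOf A + m := by
          have h := List.Nodup.idxOf_getElem ndrA _ (by omega :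
            T.outer.length - (T.outer.rotate (T.outer.idxOf C)).idxOf A + m
              < (T.outer.rotate (T.outer.idxOf A)).length)
          rw [h10] at h; exact h
        rw [hidxCrA, hidxBrA] at hordA
        omega
      · -- B = A, contradiction
        have hmeq : m = (T.outer.rotate (T.outer.idxOf C)).idxOf A := by omega
        exact hAB (hrCkA.symm.trans ((aux_getElem_congr hmeq.symm).trans hgm))
    have hti_mem_path : ti ∈ ccwPath T.outer C A := by
      rw [hti_path]; exact List.getElem_mem _
    have hti1_mem_path : ti1 ∈ ccwPath T.outer C A := by
      rw [hti1_path]; exact List.getElem_mem _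
    have hB1 : B ≠ ti := fun h => hBpath (h ▸ hti_mem_path)
    have hB2 : B ≠ ti1 := fun h => hBpath (h ▸ hti1_mem_path)
    have hB3 : B ≠ uj := fun h => hujnot (h ▸ hBm)
    -- the path from ti to ti1 is just the edge
    have hccw2 : ccwPath T.outer ti ti1 = [ti, ti1] := by
      apply List.ext_getElem
      · rw [hlenT]; simp; omega
      · intro m h1m h2m
        have hm2 : m < 2 := by simpa using h2m
        interval_cases m
        · exact (List.getElem_of_eq hpathT h1m).trans ((List.getElem_take).trans
            ((hrT_rC 0 (by omega)).trans
              ((aux_getElem_congr (by omega)).trans hti_rC.symm)))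
        · exact (List.getElem_of_eq hpathT h1m).trans ((List.getElem_take).trans
            ((hrT_rC 1 (by omega)).trans
              ((aux_getElem_congr (by omega)).trans hti1_rC.symm)))
    exact hne ⟨by rw [hccw2]; exact aux_block_edge T hW ti ti1 uj B h1 h2 h3 hB1 hB2 hB3 hBm, h1⟩
end CZPaper
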